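/- Let Q ≥ 1 be a real number and let t be a positive integer. Let 𝒮(Q) be the set of perfect squares in the interval (Q, 2Q], and let 𝒮_t(Q) = { q ∈ ℕ : tq ∈ 𝒮(Q) }. Set g_t = f_t²/t (a positive integer). Then 𝒮_t(Q) = { q₂² · g_t : q₂ ∈ ℕ, √Q / f_t < q₂ ≤ √(2Q) / f_t }, and every element of 𝒮_t(Q) lies in the interval (Q/t, 2Q/t]. -/

import Mathlib

open Finset

/-- `f_t = ∏_{p ∣ t} p^{⌈v_p(t)/2⌉}`, where `v_p(t)` is the `p`-adic valuation of `t`. -/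
def ft (t : ℕ) : ℕ :=
  ∏ p ∈ t.primeFactors, p ^ ((t.factorization p + 1) / 2)

lemma ft_pos (t : ℕ) (ht : 0 < t) : 0 < ft t := by
  apply Finset.prod_pos
  intro p hp
  exact pow_pos (Nat.pos_of_mem_primeFactors hp) _

lemma ft_factorization (t : ℕ) (ht : 0 < t) (p : ℕ) (hp : p.Prime) :
    (ft t).factorization p = (t.factorization p + 1) / 2 := by
  unfold ft
  rw [Nat.factorization_prod (fun q hq => pow_ne_zero _ (Nat.pos_of_mem_primeFactors hq).ne')]
  simp only [Finsupp.coe_finset_sum, Finset.sum_apply, Nat.factorization_pow]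
  by_cases hmem : p ∈ t.primeFactors
  · rw [Finset.sum_eq_single p]
    · simp [Nat.Prime.factorization (Nat.prime_of_mem_primeFactors hmem)]
    · intro q hq hne
      simp [Nat.Prime.factorization (Nat.prime_of_mem_primeFactors hq), Finsupp.single_apply, hne]
    · intro h; exact absurd hmem h
  · rw [Finset.sum_eq_zero, eq_comm]
    · have : t.factorization p = 0 := Nat.factorization_eq_zero_of_not_dvd (by
        intro hdvd
        exact hmem (Nat.mem_primeFactors.mpr ⟨hp, hdvd, ht.ne'⟩))
      omega
    · intro q hq
      have hne : q ≠ p := fun h => hmem (h ▸ hq)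
      simp [Nat.Prime.factorization (Nat.prime_of_mem_primeFactors hq), Finsupp.single_apply, hne]

/-- `g_t = f_t² / t` (a positive integer, since `t ∣ f_t²`). -/
def gt' (t : ℕ) : ℕ := ft t ^ 2 / t

lemma t_dvd_ft_sq (t : ℕ) (ht : 0 < t) : t ∣ ft t ^ 2 := by
  rw [← Nat.factorization_le_iff_dvd ht.ne' (pow_ne_zero _ (ft_pos t ht).ne')]
  intro p
  by_cases hp : p.Prime
  · rw [Nat.factorization_pow]
    simp only [Finsupp.smul_apply, smul_eq_mul]
    rw [ft_factorization t ht p hp]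
    omega
  · simp [Nat.factorization_eq_zero_of_not_prime _ hp]

lemma ft_sq (t : ℕ) (ht : 0 < t) : ft t ^ 2 = t * gt' t :=
  (Nat.mul_div_cancel' (t_dvd_ft_sq t ht)).symm

-- forward direction: if t*q is a positive square, then f ∣ its root
lemma key (t : ℕ) (ht : 0 < t) (q : ℕ) (hq : 0 < q) (hs : IsSquare (t * q)) :
    ∃ q₂ : ℕ, q = q₂ ^ 2 * gt' t ∧ t * q = (q₂ * ft t) ^ 2 := by
  obtain ⟨s, hs⟩ := hs
  have hs2 : t * q = s ^ 2 := by rw [hs, sq]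
  have hspos : 0 < s := by
    rcases Nat.eq_zero_or_pos s with h | h
    · simp [h] at hs2; omega
    · exact h
  have hf : ft t ∣ s := by
    rw [← Nat.factorization_le_iff_dvd (ft_pos t ht).ne' hspos.ne']
    intro p
    by_cases hp : p.Prime
    · rw [ft_factorization t ht p hp]
      have h1 : (t * q).factorization p = (s ^ 2).factorization p := by rw [hs2]
      rw [Nat.factorization_mul ht.ne' hq.ne', Nat.factorization_pow] at h1
      simp only [Finsupp.add_apply, Finsupp.smul_apply, smul_eq_mul] at h1
      omega
    · simp [Nat.factorization_eq_zero_of_not_prime _ hp]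
  obtain ⟨q₂, hq₂⟩ := hf
  refine ⟨q₂, ?_, ?_⟩
  · have h2 : t * q = q₂ ^ 2 * (t * gt' t) := by
      rw [← ft_sq t ht, hs2, hq₂]; ring
    have := Nat.eq_of_mul_eq_mul_left ht (h2.trans (by ring) : t * q = t * (q₂ ^ 2 * gt' t))
    exact this
  · rw [hs2, hq₂]; ring

/-- With `𝒮(Q)` the set of perfect squares in `(Q, 2Q]` and `𝒮_t(Q) = {q : tq ∈ 𝒮(Q)}`:
`𝒮_t(Q) = {q₂² g_t : √Q/f_t < q₂ ≤ √(2Q)/f_t}`, and `𝒮_t(Q) ⊆ (Q/t, 2Q/t]`. -/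
theorem stmt_11 (Q : ℝ) (hQ : 1 ≤ Q) (t : ℕ) (ht : 0 < t) :
    ({q : ℕ | IsSquare (t * q) ∧ Q < ((t * q : ℕ) : ℝ) ∧ ((t * q : ℕ) : ℝ) ≤ 2 * Q}
        = {q : ℕ | ∃ q₂ : ℕ, Real.sqrt Q / ft t < (q₂ : ℝ) ∧
            (q₂ : ℝ) ≤ Real.sqrt (2 * Q) / ft t ∧ q = q₂ ^ 2 * gt' t}) ∧
      ∀ q : ℕ,
        (IsSquare (t * q) ∧ Q < ((t * q : ℕ) : ℝ) ∧ ((t * q : ℕ) : ℝ) ≤ 2 * Q) →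
          Q / t < (q : ℝ) ∧ (q : ℝ) ≤ 2 * Q / t := by
  have htR : (0:ℝ) < t := by exact_mod_cast ht
  have hft : (0:ℝ) < (ft t : ℝ) := by exact_mod_cast ft_pos t ht
  constructor
  · ext q
    simp only [Set.mem_setOf_eq]
    constructor
    · rintro ⟨hsq, h1, h2⟩
      have hq : 0 < q := by
        rcases Nat.eq_zero_or_pos q with h | h
        · exfalso; rw [h, Nat.mul_zero] at h1; push_cast at h1; linarith
        · exact h
      obtain ⟨q₂, hq₂, heq⟩ := key t ht q hq hsq
      rw [heq] at h1 h2
      push_cast at h1 h2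
      have hq₂0 : q₂ ≠ 0 := by
        rintro rfl; rw [zero_mul] at heq; simp at heq; omega
      have hc : (0:ℝ) < (q₂ : ℝ) * (ft t : ℝ) :=
        mul_pos (by exact_mod_cast Nat.pos_of_ne_zero hq₂0) hft
      refine ⟨q₂, ?_, ?_, hq₂⟩
      · rw [div_lt_iff₀ hft]
        exact (Real.sqrt_lt' hc).mpr h1
      · rw [le_div_iff₀ hft]
        rw [Real.le_sqrt (mul_nonneg (Nat.cast_nonneg q₂) hft.le) (by linarith)]
        nlinarith
    · rintro ⟨q₂, h1, h2, hq⟩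
      have heq : t * q = (q₂ * ft t) ^ 2 := by
        rw [hq, mul_pow, ft_sq t ht]; ring
      have hq₂ : (0:ℝ) < q₂ := by
        have : (0:ℝ) < Real.sqrt Q / ft t := by
          apply div_pos (Real.sqrt_pos.mpr (by linarith)) hft
        linarith
      have hc : (0:ℝ) < (q₂ : ℝ) * (ft t : ℝ) := mul_pos hq₂ hft
      refine ⟨⟨q₂ * ft t, by rw [heq, sq]⟩, ?_, ?_⟩
      · rw [heq]; push_cast
        rw [div_lt_iff₀ hft] at h1
        exact (Real.sqrt_lt' (by nlinarith)).mp h1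
      · rw [heq]; push_cast
        rw [le_div_iff₀ hft] at h2
        have h3 := (Real.le_sqrt hc.le (by linarith)).mp h2
        exact h3
  · rintro q ⟨-, h1, h2⟩
    push_cast at h1 h2
    constructor
    · rw [div_lt_iff₀ htR]; nlinarith
    · rw [le_div_iff₀ htR]; nlinarith
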